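/- Let H = C[N] be the polynomial functions on the nilpotent cone N of sl₂(C), identified with the graded algebra ⊕_{t≥0} V(2t) where V(2t) sits in degree t and is the irreducible SL₂-representation of dimension 2t+1. Consider the graded commutative algebra A = (C[N] ⊗ Z) / (C[N]_+ ⊗ span(x_i + y_i, e_St : i)) where Z = ∏_i C[x_i,y_i]/(x_i²,x_iy_i,y_i²) × C·e_St is the center of u_q(sl₂) and C[N]_+ is the augmentation ideal. Then the degree-0 part of A is Z, and for each degree t ≥ 1 the graded piece of the i-th regular block factor of A has dimension (2t+1)·2 (spanned by C^t[N]·e_i and the image of C^t[N]·x_i ≅ C^t[N]·(−y_i)). -/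

import Mathlib

open MvPolynomial TensorProduct

/-- One regular-block factor `ℂ[x,y]/(x², xy, y²)` of the center `Z` of `u_q(sl₂)`
(Kerler's presentation). -/
noncomputable abbrev blockZ : Type :=
  MvPolynomial (Fin 2) ℂ ⧸
    (Ideal.span {(X 0 : MvPolynomial (Fin 2) ℂ) ^ 2, X 0 * X 1, X 1 ^ 2})

noncomputable def xA : blockZ :=
  Ideal.Quotient.mk _ (X 0 : MvPolynomial (Fin 2) ℂ)
noncomputable def yA : blockZ :=
  Ideal.Quotient.mk _ (X 1 : MvPolynomial (Fin 2) ℂ)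

noncomputable def evalTSZE : MvPolynomial (Fin 2) ℂ →ₐ[ℂ] TrivSqZeroExt ℂ (ℂ × ℂ) :=
  MvPolynomial.aeval ![TrivSqZeroExt.inr (1, 0), TrivSqZeroExt.inr (0, 1)]

lemma ideal_le_ker :
    Ideal.span {(X 0 : MvPolynomial (Fin 2) ℂ) ^ 2, X 0 * X 1, X 1 ^ 2} ≤
      RingHom.ker evalTSZE := by
  rw [Ideal.span_le]
  rintro p hp
  simp only [Set.mem_insert_iff, Set.mem_singleton_iff] at hp
  rcases hp with rfl | rfl | rfl <;>
    simp [RingHom.mem_ker, evalTSZE, sq, TrivSqZeroExt.inr_mul_inr]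

noncomputable def φ : blockZ →ₐ[ℂ] TrivSqZeroExt ℂ (ℂ × ℂ) :=
  Ideal.Quotient.liftₐ _ evalTSZE fun a ha => ideal_le_ker ha

@[simp] lemma φ_xA : φ xA = TrivSqZeroExt.inr (1, 0) := by
  simp [φ, xA, evalTSZE]
  exact (Ideal.Quotient.lift_mk _ _ _).trans (by simp)

@[simp] lemma φ_yA : φ yA = TrivSqZeroExt.inr (0, 1) := by
  simp [φ, yA, evalTSZE]
  exact (Ideal.Quotient.lift_mk _ _ _).trans (by simp)

/-- coordinates of the truncated algebra -/
noncomputable def coords : TrivSqZeroExt ℂ (ℂ × ℂ) →ₗ[ℂ] Fin 3 → ℂ where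
  toFun z := ![z.fst, z.snd.1, z.snd.2]
  map_add' a b := by
    funext i; fin_cases i <;> simp
  map_smul' c a := by
    funext i; fin_cases i <;> simp

noncomputable def basV : Fin 3 → blockZ := ![1, xA, yA]

lemma comp_eq : (coords ∘ₗ φ.toLinearMap) ∘ basV = fun i => Pi.single i 1 := by
  funext i
  fin_cases i <;>
  · funext j
    fin_cases j <;> simp [basV, coords, Pi.single, Function.update] <;> rfl

lemma indep : LinearIndependent ℂ basV := by
  apply LinearIndependent.of_comp (coords ∘ₗ φ.toLinearMap)
  rw [comp_eq]
  have h := (Pi.basisFun ℂ (Fin 3)).linearIndependent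
  have he : ⇑(Pi.basisFun ℂ (Fin 3)) = fun i => Pi.single i 1 := by
    funext i; exact Pi.basisFun_apply ℂ (Fin 3) i
  rwa [he] at h

lemma range_basV : Set.range basV = {1, xA, yA} := by
  ext z
  constructor
  · rintro ⟨j, rfl⟩
    fin_cases j <;> simp [basV]
  · rintro (rfl | rfl | rfl)
    exacts [⟨0, rfl⟩, ⟨1, rfl⟩, ⟨2, rfl⟩]

lemma mul_mem_span (i : Fin 2) :
    ∀ z ∈ Submodule.span ℂ (Set.range basV),
      z * Ideal.Quotient.mk _ (X i : MvPolynomial (Fin 2) ℂ) ∈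
        Submodule.span ℂ (Set.range basV) := by
  intro z hz
  induction hz using Submodule.span_induction with
  | mem u hu =>
    rw [range_basV] at hu ⊢
    have hx : xA ∈ Submodule.span ℂ ({1, xA, yA} : Set blockZ) :=
      Submodule.subset_span (by simp)
    have hy : yA ∈ Submodule.span ℂ ({1, xA, yA} : Set blockZ) :=
      Submodule.subset_span (by simp)
    have key : ∀ p : MvPolynomial (Fin 2) ℂ,
        p ∈ Ideal.span {(X 0 : MvPolynomial (Fin 2) ℂ) ^ 2, X 0 * X 1, X 1 ^ 2} →
        (Ideal.Quotient.mk _ p : blockZ) = 0 := fun p hp =>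
      (Ideal.Quotient.eq_zero_iff_mem).mpr hp
    simp only [Set.mem_insert_iff, Set.mem_singleton_iff] at hu
    rcases hu with rfl | rfl | rfl <;> fin_cases i
    · rw [one_mul]; exact hx
    · rw [one_mul]; exact hy
    · have : xA * Ideal.Quotient.mk _ (X (0 : Fin 2) : MvPolynomial (Fin 2) ℂ) = 0 := by
        rw [xA, ← map_mul]
        exact key _ (Ideal.subset_span (by simp [sq]))
      rw [show ((⟨0, by omega⟩ : Fin 2)) = (0 : Fin 2) from rfl, this]
      exact Submodule.zero_mem _
    · have : xA * Ideal.Quotient.mk _ (X (1 : Fin 2) : MvPolynomial (Fin 2) ℂ) = 0 := by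
        rw [xA, ← map_mul]
        exact key _ (Ideal.subset_span (by simp))
      rw [show ((⟨1, by omega⟩ : Fin 2)) = (1 : Fin 2) from rfl, this]
      exact Submodule.zero_mem _
    · have : yA * Ideal.Quotient.mk _ (X (0 : Fin 2) : MvPolynomial (Fin 2) ℂ) = 0 := by
        rw [yA, ← map_mul]
        refine key _ (Ideal.subset_span ?_)
        rw [mul_comm]; simp
      rw [show ((⟨0, by omega⟩ : Fin 2)) = (0 : Fin 2) from rfl, this]
      exact Submodule.zero_mem _
    · have : yA * Ideal.Quotient.mk _ (X (1 : Fin 2) : MvPolynomial (Fin 2) ℂ) = 0 := by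
        rw [yA, ← map_mul]
        exact key _ (Ideal.subset_span (by simp [sq]))
      rw [show ((⟨1, by omega⟩ : Fin 2)) = (1 : Fin 2) from rfl, this]
      exact Submodule.zero_mem _
  | zero => simp
  | add a b _ _ ha hb => rw [add_mul]; exact Submodule.add_mem _ ha hb
  | smul c a _ ha => rw [smul_mul_assoc]; exact Submodule.smul_mem _ _ ha

lemma span_top : Submodule.span ℂ (Set.range basV) = ⊤ := by
  rw [Submodule.eq_top_iff']
  intro z
  obtain ⟨p, rfl⟩ := Ideal.Quotient.mk_surjective z
  induction p using MvPolynomial.induction_on with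
  | C a =>
    have hC : (C a : MvPolynomial (Fin 2) ℂ) = a • 1 := by
      rw [MvPolynomial.smul_eq_C_mul, mul_one]
    rw [← Ideal.Quotient.mkₐ_eq_mk ℂ, hC, map_smul, map_one]
    exact Submodule.smul_mem _ _ (Submodule.subset_span ⟨0, rfl⟩)
  | add p q hp hq => rw [map_add]; exact Submodule.add_mem _ hp hq
  | mul_X p i hp =>
    rw [map_mul]
    exact mul_mem_span i _ hp

noncomputable def basB : Module.Basis (Fin 3) ℂ blockZ :=
  Module.Basis.mk indep (by rw [span_top])

lemma finrank_blockZ : Module.finrank ℂ blockZ = 3 := by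
  have : FiniteDimensional ℂ blockZ := Module.Finite.of_basis basB
  rw [Module.finrank_eq_card_basis basB, Fintype.card_fin]

lemma xy_ne : xA + yA ≠ 0 := by
  intro h
  have := congrArg φ h
  rw [map_add, φ_xA, φ_yA, map_zero, ← TrivSqZeroExt.inr_add] at this
  have := congrArg TrivSqZeroExt.snd this
  simp [Prod.ext_iff] at this

instance : FiniteDimensional ℂ blockZ := Module.Finite.of_basis basB

theorem stmt_16 (t : ℕ) (ht : 1 ≤ t) :
    Module.finrank ℂ blockZ = 3 ∧
    Module.finrank ℂ
      (((Fin (2 * t + 1) → ℂ) ⊗[ℂ] blockZ) ⧸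
        LinearMap.range
          (TensorProduct.map (LinearMap.id : (Fin (2 * t + 1) → ℂ) →ₗ[ℂ] _)
            (Submodule.span ℂ ({xA + yA} : Set blockZ)).subtype))
      = (2 * t + 1) * 2 := by
  refine ⟨finrank_blockZ, ?_⟩
  set n := 2 * t + 1
  set S := Submodule.span ℂ ({xA + yA} : Set blockZ)
  have hS : Module.finrank ℂ S = 1 := finrank_span_singleton xy_ne
  set f := TensorProduct.map (LinearMap.id : (Fin n → ℂ) →ₗ[ℂ] _) S.subtype
  have hinj : Function.Injective f :=
    Module.Flat.lTensor_preserves_injective_linearMap S.subtype S.injective_subtype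
  have hrange : Module.finrank ℂ (LinearMap.range f) = n := by
    rw [LinearMap.finrank_range_of_inj hinj, Module.finrank_tensorProduct, hS,
      Module.finrank_pi, Fintype.card_fin, mul_one]
  have htot : Module.finrank ℂ ((Fin n → ℂ) ⊗[ℂ] blockZ) = n * 3 := by
    rw [Module.finrank_tensorProduct, finrank_blockZ, Module.finrank_pi, Fintype.card_fin]
  have h := Submodule.finrank_quotient_add_finrank (LinearMap.range f)
  rw [hrange, htot] at h
  omega
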